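/- For the focusing ground state, $\|\phi_\mu\|_{L^\infty(0,1)} \to 0$ as $\mu \to -\pi^2$. -/

import Mathlib

open Set Filter

/-- The focusing ground state predicate. -/
def IsGroundState (μ : ℝ) (φ : ℝ → ℝ) : Prop :=
  ∃ φ' φ'' φ''' : ℝ → ℝ,
    (∀ x ∈ Set.Icc (0:ℝ) 1, HasDerivAt φ (φ' x) x ∧ HasDerivAt φ' (φ'' x) x ∧
      HasDerivAt φ'' (φ''' x) x) ∧
    ContinuousOn φ''' (Set.Icc 0 1) ∧
    φ 0 = 0 ∧ φ 1 = 0 ∧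
    (∀ x ∈ Set.Ioo (0:ℝ) 1, 0 < φ x) ∧
    (∀ x ∈ Set.Icc (0:ℝ) 1, φ'' x + φ x ^ 3 = μ * φ x)

open intervalIntegral MeasureTheory in
lemma ground_state_sup_bound {μ : ℝ} {φ : ℝ → ℝ}
    (hμ : -Real.pi ^ 2 < μ) (hμ0 : μ < 0) (hg : IsGroundState μ φ) :
    0 ≤ sSup ((fun x => |φ x|) '' Set.Icc (0:ℝ) 1) ∧
    sSup ((fun x => |φ x|) '' Set.Icc (0:ℝ) 1) ≤ Real.sqrt (162 * (μ + Real.pi ^ 2)) := by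
  obtain ⟨φ', φ'', φ''', hd, _, h0, h1, hpos, heq⟩ := hg
  have hI : Set.uIcc (0:ℝ) 1 = Set.Icc 0 1 := Set.uIcc_of_le zero_le_one
  have hcφ : ContinuousOn φ (Set.Icc 0 1) := fun x hx =>
    ((hd x hx).1).continuousAt.continuousWithinAt
  have hcφ' : ContinuousOn φ' (Set.Icc 0 1) := fun x hx =>
    ((hd x hx).2.1).continuousAt.continuousWithinAt
  have hcφ'' : ContinuousOn φ'' (Set.Icc 0 1) := fun x hx =>
    ((hd x hx).2.2).continuousAt.continuousWithinAt
  have hnn : ∀ x ∈ Set.Icc (0:ℝ) 1, 0 ≤ φ x := by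
    rintro x ⟨hx0, hx1⟩
    rcases eq_or_lt_of_le hx0 with h | h
    · simp [← h, h0]
    rcases eq_or_lt_of_le hx1 with h' | h'
    · simp [h', h1]
    exact (hpos x ⟨h, h'⟩).le
  obtain ⟨x₀, hx₀, hmax⟩ := isCompact_Icc.exists_isMaxOn (Set.nonempty_Icc.2 zero_le_one) hcφ
  set M := φ x₀ with hMdef
  have hM0 : 0 ≤ M := hnn x₀ hx₀
  have hle : ∀ x ∈ Set.Icc (0:ℝ) 1, φ x ≤ M := fun x hx => hmax hx
  have hconc : ConcaveOn ℝ (Set.Icc 0 1) φ := by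
    apply concaveOn_of_hasDerivWithinAt2_nonpos (convex_Icc 0 1) hcφ
      (f' := φ') (f'' := φ'')
    · intro x hx
      rw [interior_Icc] at hx
      exact ((hd x (Set.mem_Icc_of_Ioo hx)).1).hasDerivWithinAt
    · intro x hx
      rw [interior_Icc] at hx
      exact ((hd x (Set.mem_Icc_of_Ioo hx)).2.1).hasDerivWithinAt
    · intro x hx
      rw [interior_Icc] at hx
      have h1' := heq x (Set.mem_Icc_of_Ioo hx)
      have h2' := (hpos x hx).le
      nlinarith [pow_nonneg h2' 3]
  have hlb : ∀ x ∈ Set.Icc (1/3 : ℝ) (2/3 : ℝ), M / 3 ≤ φ x := by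
    rintro x ⟨hx1, hx2⟩
    rcases le_total x x₀ with hc | hc
    · have hx₀pos : 0 < x₀ := lt_of_lt_of_le (by norm_num) (le_trans hx1 hc)
      have ha : (0:ℝ) ≤ 1 - x / x₀ := by
        have : x / x₀ ≤ 1 := (div_le_one hx₀pos).2 hc
        linarith
      have hb : (0:ℝ) ≤ x / x₀ := div_nonneg (by linarith) hx₀pos.le
      have key := hconc.2 (Set.left_mem_Icc.2 zero_le_one) hx₀ ha hb (by ring)
      simp only [smul_eq_mul, mul_zero, zero_add, h0] at key
      have harg : x / x₀ * x₀ = x := div_mul_cancel₀ x hx₀pos.ne'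
      rw [harg] at key
      have h13 : (1:ℝ)/3 ≤ x / x₀ := by
        rw [le_div_iff₀ hx₀pos]
        nlinarith [hx₀.2]
      nlinarith [mul_le_mul_of_nonneg_right h13 hM0]
    · have hx₀lt : x₀ < 1 := lt_of_le_of_lt hc (lt_of_le_of_lt hx2 (by norm_num))
      have hd0 : (0:ℝ) < 1 - x₀ := by linarith
      have ha : (0:ℝ) ≤ (1 - x) / (1 - x₀) :=
        div_nonneg (by linarith [hx2]) hd0.le
      have hb : (0:ℝ) ≤ (x - x₀) / (1 - x₀) := div_nonneg (by linarith) hd0.le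
      have hab : (1 - x) / (1 - x₀) + (x - x₀) / (1 - x₀) = 1 := by
        field_simp
        ring
      have key := hconc.2 hx₀ (Set.right_mem_Icc.2 zero_le_one) ha hb hab
      simp only [smul_eq_mul, mul_one, h1] at key
      have harg : (1 - x) / (1 - x₀) * x₀ + (x - x₀) / (1 - x₀) = x := by
        field_simp
        ring
      rw [harg] at key
      have h13 : (1:ℝ)/3 ≤ (1 - x) / (1 - x₀) := by
        rw [le_div_iff₀ hd0]
        nlinarith [hx₀.1]
      nlinarith [mul_le_mul_of_nonneg_right h13 hM0]
  -- sine test function facts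
  have cS : Continuous fun x : ℝ => Real.sin (Real.pi * x) :=
    Real.continuous_sin.comp (continuous_const.mul continuous_id)
  have hIci : ∀ {f : ℝ → ℝ}, ContinuousOn f (Set.Icc 0 1) →
      IntervalIntegrable f volume 0 1 := fun h =>
    ContinuousOn.intervalIntegrable (by rwa [hI])
  have hS : ∀ x : ℝ, HasDerivAt (fun y => Real.sin (Real.pi * y))
      (Real.cos (Real.pi * x) * Real.pi) x := by
    intro x
    have := (Real.hasDerivAt_sin (Real.pi * x)).comp x
      ((hasDerivAt_id x).const_mul Real.pi)
    simpa [Function.comp_def] using this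
  have hC : ∀ x : ℝ, HasDerivAt (fun y => Real.cos (Real.pi * y) * Real.pi)
      (-Real.sin (Real.pi * x) * Real.pi * Real.pi) x := by
    intro x
    have := ((Real.hasDerivAt_cos (Real.pi * x)).comp x
      ((hasDerivAt_id x).const_mul Real.pi)).mul_const Real.pi
    simpa [mul_comm, mul_assoc, mul_left_comm] using this
  have cC : Continuous fun x : ℝ => Real.cos (Real.pi * x) * Real.pi :=
    (Real.continuous_cos.comp (continuous_const.mul continuous_id)).mul continuous_const
  -- integration by parts (twice)
  have ibp2 : ∫ x in (0:ℝ)..1, (Real.cos (Real.pi * x) * Real.pi) * φ' x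
      = Real.pi ^ 2 * ∫ x in (0:ℝ)..1, Real.sin (Real.pi * x) * φ x := by
    have := intervalIntegral.integral_mul_deriv_eq_deriv_mul
      (u := fun y => Real.cos (Real.pi * y) * Real.pi) (v := φ)
      (u' := fun x => -Real.sin (Real.pi * x) * Real.pi * Real.pi) (v' := φ')
      (fun x _ => hC x) (fun x hx => (hd x (hI ▸ hx)).1)
      ((((Real.continuous_sin.comp (continuous_const.mul continuous_id)).neg.mul
        continuous_const).mul continuous_const).continuousOn.intervalIntegrable)
      (hIci hcφ')
    rw [this, h0, h1]
    have hrw : (fun x => -Real.sin (Real.pi * x) * Real.pi * Real.pi * φ x)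
        = fun x => (-(Real.pi ^ 2)) * (Real.sin (Real.pi * x) * φ x) := by
      funext x; ring
    rw [hrw, intervalIntegral.integral_const_mul]
    ring
  have ibp1 : ∫ x in (0:ℝ)..1, Real.sin (Real.pi * x) * φ'' x
      = -(Real.pi ^ 2 * ∫ x in (0:ℝ)..1, Real.sin (Real.pi * x) * φ x) := by
    have := intervalIntegral.integral_mul_deriv_eq_deriv_mul
      (u := fun y => Real.sin (Real.pi * y)) (v := φ')
      (u' := fun x => Real.cos (Real.pi * x) * Real.pi) (v' := φ'')
      (fun x _ => hS x) (fun x hx => (hd x (hI ▸ hx)).2.1)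
      (cC.continuousOn.intervalIntegrable)
      (hIci hcφ'')
    rw [this, ibp2]
    simp [Real.sin_pi]
  -- the weak form of the equation
  have hzero : ∫ x in (0:ℝ)..1,
      Real.sin (Real.pi * x) * (φ'' x + φ x ^ 3 - μ * φ x) = 0 := by
    have heqon : Set.EqOn
        (fun x => Real.sin (Real.pi * x) * (φ'' x + φ x ^ 3 - μ * φ x))
        (fun _ => (0:ℝ)) (Set.uIcc 0 1) := by
      intro x hx
      rw [hI] at hx
      have := heq x hx
      simp only
      rw [show φ'' x + φ x ^ 3 - μ * φ x = 0 by linarith, mul_zero]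
    rw [intervalIntegral.integral_congr heqon]
    simp
  have hint1 : IntervalIntegrable (fun x => Real.sin (Real.pi * x) * φ'' x) volume 0 1 :=
    hIci ((cS.continuousOn).mul hcφ'')
  have hint3 : IntervalIntegrable (fun x => Real.sin (Real.pi * x) * φ x ^ 3) volume 0 1 :=
    hIci ((cS.continuousOn).mul (hcφ.pow 3))
  have hintφ : IntervalIntegrable (fun x => Real.sin (Real.pi * x) * φ x) volume 0 1 :=
    hIci ((cS.continuousOn).mul hcφ)
  have hkey : (∫ x in (0:ℝ)..1, Real.sin (Real.pi * x) * φ x ^ 3)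
      = (μ + Real.pi ^ 2) * ∫ x in (0:ℝ)..1, Real.sin (Real.pi * x) * φ x := by
    have hsplit : (∫ x in (0:ℝ)..1,
        Real.sin (Real.pi * x) * (φ'' x + φ x ^ 3 - μ * φ x))
        = (∫ x in (0:ℝ)..1, Real.sin (Real.pi * x) * φ'' x)
          + (∫ x in (0:ℝ)..1, Real.sin (Real.pi * x) * φ x ^ 3)
          - μ * ∫ x in (0:ℝ)..1, Real.sin (Real.pi * x) * φ x := by
      have hrw : (fun x => Real.sin (Real.pi * x) * (φ'' x + φ x ^ 3 - μ * φ x))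
          = fun x => (Real.sin (Real.pi * x) * φ'' x + Real.sin (Real.pi * x) * φ x ^ 3)
            - μ * (Real.sin (Real.pi * x) * φ x) := by
        funext x; ring
      rw [hrw, intervalIntegral.integral_sub (hint1.add hint3) (hintφ.const_mul μ),
        intervalIntegral.integral_add hint1 hint3, intervalIntegral.integral_const_mul]
    rw [hzero, ibp1] at hsplit
    linarith
  -- sin is between 0 and 1 on [0,1]
  have hsin_nonneg : ∀ x ∈ Set.Icc (0:ℝ) 1, 0 ≤ Real.sin (Real.pi * x) := by
    rintro x ⟨hx0, hx1⟩
    exact Real.sin_nonneg_of_nonneg_of_le_pi (mul_nonneg Real.pi_pos.le hx0)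
      (by nlinarith [Real.pi_pos])
  -- upper bound on ∫ sin φ
  have hub : (∫ x in (0:ℝ)..1, Real.sin (Real.pi * x) * φ x) ≤ M := by
    have hmono : ∀ x ∈ Set.Icc (0:ℝ) 1, Real.sin (Real.pi * x) * φ x ≤ M := by
      intro x hx
      calc Real.sin (Real.pi * x) * φ x ≤ 1 * φ x :=
            mul_le_mul_of_nonneg_right (Real.sin_le_one _) (hnn x hx)
        _ = φ x := one_mul _
        _ ≤ M := hle x hx
    have := intervalIntegral.integral_mono_on zero_le_one hintφ
      (_root_.intervalIntegrable_const (c := M)) hmono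
    simpa using this
  -- sin ≥ 1/2 on [1/3, 2/3]
  have hsin_half : ∀ x ∈ Set.Icc (1/3 : ℝ) (2/3 : ℝ),
      (1/2 : ℝ) ≤ Real.sin (Real.pi * x) := by
    rintro x ⟨hx1, hx2⟩
    have h1' : Real.sin (Real.pi * x) = Real.cos (Real.pi / 2 - Real.pi * x) :=
      (Real.cos_pi_div_two_sub _).symm
    rw [h1', ← Real.cos_abs]
    have habs : |Real.pi / 2 - Real.pi * x| ≤ Real.pi / 6 := by
      rw [abs_le]
      constructor <;> nlinarith [Real.pi_pos]
    have hsqrt3 : (1:ℝ) ≤ Real.sqrt 3 := by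
      rw [show (1:ℝ) = Real.sqrt 1 by simp]
      exact Real.sqrt_le_sqrt (by norm_num)
    calc (1/2 : ℝ) ≤ Real.sqrt 3 / 2 := by linarith
      _ = Real.cos (Real.pi / 6) := Real.cos_pi_div_six.symm
      _ ≤ Real.cos |Real.pi / 2 - Real.pi * x| :=
          Real.cos_le_cos_of_nonneg_of_le_pi (abs_nonneg _)
            (by linarith [Real.pi_pos]) habs
  -- lower bound on ∫ sin φ³
  have hI3lb : M ^ 3 / 162 ≤ ∫ x in (0:ℝ)..1, Real.sin (Real.pi * x) * φ x ^ 3 := by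
    have hsub : ∀ a b : ℝ, (0:ℝ) ≤ a → b ≤ 1 → a ≤ b →
        IntervalIntegrable (fun x => Real.sin (Real.pi * x) * φ x ^ 3) volume a b := by
      intro a b ha hb hab
      refine hint3.mono_set ?_
      rw [hI, Set.uIcc_of_le hab]
      exact Set.Icc_subset_Icc ha hb
    have e1 : (∫ x in (0:ℝ)..(1/3:ℝ), Real.sin (Real.pi * x) * φ x ^ 3)
        + (∫ x in (1/3:ℝ)..(2/3:ℝ), Real.sin (Real.pi * x) * φ x ^ 3)
        = ∫ x in (0:ℝ)..(2/3:ℝ), Real.sin (Real.pi * x) * φ x ^ 3 :=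
      intervalIntegral.integral_add_adjacent_intervals
        (hsub 0 (1/3) (by norm_num) (by norm_num) (by norm_num))
        (hsub (1/3) (2/3) (by norm_num) (by norm_num) (by norm_num))
    have e2 : (∫ x in (0:ℝ)..(2/3:ℝ), Real.sin (Real.pi * x) * φ x ^ 3)
        + (∫ x in (2/3:ℝ)..(1:ℝ), Real.sin (Real.pi * x) * φ x ^ 3)
        = ∫ x in (0:ℝ)..(1:ℝ), Real.sin (Real.pi * x) * φ x ^ 3 :=
      intervalIntegral.integral_add_adjacent_intervals
        (hsub 0 (2/3) (by norm_num) (by norm_num) (by norm_num))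
        (hsub (2/3) 1 (by norm_num) (by norm_num) (by norm_num))
    have hn1 : (0:ℝ) ≤ ∫ x in (0:ℝ)..(1/3:ℝ), Real.sin (Real.pi * x) * φ x ^ 3 := by
      apply intervalIntegral.integral_nonneg (by norm_num)
      intro x hx
      have hx' : x ∈ Set.Icc (0:ℝ) 1 := ⟨hx.1, by linarith [hx.2]⟩
      exact mul_nonneg (hsin_nonneg x hx') (pow_nonneg (hnn x hx') 3)
    have hn3 : (0:ℝ) ≤ ∫ x in (2/3:ℝ)..(1:ℝ), Real.sin (Real.pi * x) * φ x ^ 3 := by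
      apply intervalIntegral.integral_nonneg (by norm_num)
      intro x hx
      have hx' : x ∈ Set.Icc (0:ℝ) 1 := ⟨by linarith [hx.1], hx.2⟩
      exact mul_nonneg (hsin_nonneg x hx') (pow_nonneg (hnn x hx') 3)
    have hmid : M ^ 3 / 162 ≤
        ∫ x in (1/3:ℝ)..(2/3:ℝ), Real.sin (Real.pi * x) * φ x ^ 3 := by
      have hmono : ∀ x ∈ Set.Icc (1/3:ℝ) (2/3:ℝ),
          (fun _ => M ^ 3 / 54) x ≤ Real.sin (Real.pi * x) * φ x ^ 3 := by
        intro x hx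
        have hcube : (M / 3) ^ 3 ≤ φ x ^ 3 :=
          pow_le_pow_left₀ (by positivity) (hlb x hx) 3
        have := mul_le_mul (hsin_half x hx) hcube (by positivity)
          ((le_trans (by norm_num) (hsin_half x hx)))
        calc M ^ 3 / 54 = 1/2 * (M/3)^3 := by ring
          _ ≤ Real.sin (Real.pi * x) * φ x ^ 3 := this
      have := intervalIntegral.integral_mono_on (by norm_num : (1/3:ℝ) ≤ 2/3)
        (_root_.intervalIntegrable_const (c := M ^ 3 / 54))
        (hsub (1/3) (2/3) (by norm_num) (by norm_num) (by norm_num)) hmono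
      rw [intervalIntegral.integral_const] at this
      calc M ^ 3 / 162 = (2/3 - 1/3 : ℝ) • (M ^ 3 / 54) := by
            simp [smul_eq_mul]; ring
        _ ≤ _ := this
    linarith
  -- combine
  have hμπ : (0:ℝ) ≤ μ + Real.pi ^ 2 := by linarith
  have hfinal : M ^ 3 / 162 ≤ (μ + Real.pi ^ 2) * M := by
    calc M ^ 3 / 162 ≤ ∫ x in (0:ℝ)..1, Real.sin (Real.pi * x) * φ x ^ 3 := hI3lb
      _ = (μ + Real.pi ^ 2) * ∫ x in (0:ℝ)..1, Real.sin (Real.pi * x) * φ x := hkey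
      _ ≤ (μ + Real.pi ^ 2) * M := mul_le_mul_of_nonneg_left hub hμπ
  have hM2 : M ^ 2 ≤ 162 * (μ + Real.pi ^ 2) := by
    rcases eq_or_lt_of_le hM0 with h | h
    · rw [← h]
      nlinarith
    · nlinarith [mul_pos h h]
  have hMsqrt : M ≤ Real.sqrt (162 * (μ + Real.pi ^ 2)) :=
    Real.le_sqrt_of_sq_le hM2
  have hbdd : BddAbove ((fun x => |φ x|) '' Set.Icc (0:ℝ) 1) := by
    refine ⟨M, ?_⟩
    rintro y ⟨x, hx, rfl⟩
    show |φ x| ≤ M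
    rw [abs_of_nonneg (hnn x hx)]
    exact hle x hx
  constructor
  · refine le_csSup hbdd ⟨0, Set.left_mem_Icc.2 zero_le_one, by simp [h0]⟩
  · refine csSup_le ⟨|φ 0|, ⟨0, Set.left_mem_Icc.2 zero_le_one, rfl⟩⟩ ?_
    rintro y ⟨x, hx, rfl⟩
    show |φ x| ≤ _
    rw [abs_of_nonneg (hnn x hx)]
    exact (hle x hx).trans hMsqrt


/-- `‖φ_μ‖_{L^∞(0,1)} → 0` as `μ → -π²` (from the right). -/
theorem stmt_5 (φ : ℝ → ℝ → ℝ)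
    (hφ : ∀ μ ∈ Set.Ioi (-Real.pi ^ 2), IsGroundState μ (φ μ)) :
    Filter.Tendsto (fun μ => sSup ((fun x => |φ μ x|) '' Set.Icc (0:ℝ) 1))
      (nhdsWithin (-Real.pi ^ 2) (Set.Ioi (-Real.pi ^ 2))) (nhds 0) := by
  have hpi : (0:ℝ) < Real.pi ^ 2 := by positivity
  have hev : ∀ᶠ μ in nhdsWithin (-Real.pi ^ 2) (Set.Ioi (-Real.pi ^ 2)),
      0 ≤ sSup ((fun x => |φ μ x|) '' Set.Icc (0:ℝ) 1) ∧
      sSup ((fun x => |φ μ x|) '' Set.Icc (0:ℝ) 1)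
        ≤ Real.sqrt (162 * (μ + Real.pi ^ 2)) := by
    filter_upwards [self_mem_nhdsWithin,
      eventually_nhdsWithin_of_eventually_nhds
        (gt_mem_nhds (show -Real.pi ^ 2 < 0 by linarith))] with μ hμ hμ0
    exact ground_state_sup_bound hμ hμ0 (hφ μ hμ)
  have hsq : Filter.Tendsto (fun μ : ℝ => Real.sqrt (162 * (μ + Real.pi ^ 2)))
      (nhdsWithin (-Real.pi ^ 2) (Set.Ioi (-Real.pi ^ 2))) (nhds 0) := by
    have hc : Continuous fun μ : ℝ => Real.sqrt (162 * (μ + Real.pi ^ 2)) :=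
      Real.continuous_sqrt.comp (continuous_const.mul (continuous_id.add continuous_const))
    have := hc.tendsto (-Real.pi ^ 2)
    simp only [neg_add_cancel, mul_zero, Real.sqrt_zero] at this
    exact this.mono_left nhdsWithin_le_nhds
  exact tendsto_of_tendsto_of_tendsto_of_le_of_le' tendsto_const_nhds hsq
    (hev.mono fun μ h => h.1) (hev.mono fun μ h => h.2)
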